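/- Let G be the subgroup of (ℂ*)^3 consisting of triples (γ1, γ2, s1) with γ1^2 γ2^{-3} = 1 and γ1 s1^2 = 1. Then the map λ ↦ (λ^6, λ^4, λ^{-3}) is a group isomorphism from ℂ* onto G. -/

import Mathlib

/-- The map λ ↦ (λ^6, λ^4, λ^{-3}) is a group isomorphism from ℂ* onto the subgroup
G = {(γ1, γ2, s1) ∈ (ℂ*)³ : γ1²γ2⁻³ = 1, γ1 s1² = 1}. -/
theorem stmt4 :
    ∃ φ : ℂˣ →* ℂˣ × ℂˣ × ℂˣ,
      (∀ l : ℂˣ, φ l = (l ^ 6, l ^ 4, l ^ (-3 : ℤ))) ∧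
      Function.Injective φ ∧
      Set.range φ =
        {p : ℂˣ × ℂˣ × ℂˣ | p.1 ^ 2 * p.2.1 ^ (-3 : ℤ) = 1 ∧ p.1 * p.2.2 ^ 2 = 1} := by
  refine ⟨(zpowGroupHom 6).prod ((zpowGroupHom 4).prod (zpowGroupHom (-3))), ?_, ?_, ?_⟩
  · intro l
    simp [zpowGroupHom, Prod.ext_iff]
  · intro a b h
    simp only [MonoidHom.prod_apply, Prod.mk.injEq, zpowGroupHom_apply] at h
    obtain ⟨h1, h2, h3⟩ := h
    have key : a ^ (4 : ℤ) * a ^ (-3 : ℤ) = b ^ (4 : ℤ) * b ^ (-3 : ℤ) := by rw [h2, h3]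
    have ha : a ^ (4 : ℤ) * a ^ (-3 : ℤ) = a := by group
    have hb : b ^ (4 : ℤ) * b ^ (-3 : ℤ) = b := by group
    rw [ha, hb] at key
    exact key
  · ext p
    simp only [Set.mem_range, Set.mem_setOf_eq, MonoidHom.prod_apply, zpowGroupHom_apply]
    constructor
    · rintro ⟨l, rfl⟩
      constructor <;> · simp only [← zpow_natCast, ← zpow_mul, ← zpow_add]; norm_num
    · rintro ⟨h1, h2⟩
      obtain ⟨g1, g2, s1⟩ := p
      simp only at h1 h2 ⊢
      have hg1 : g1 = s1 ^ (-2 : ℤ) := by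
        have h := eq_inv_of_mul_eq_one_left h2
        rw [h]; group
      have hg2 : g2 ^ (3 : ℤ) = g1 ^ (2 : ℤ) := by
        have h : g1 ^ 2 * g2 ^ (-3 : ℤ) * g2 ^ (3 : ℤ) = g2 ^ (3 : ℤ) := by rw [h1, one_mul]
        rw [← h]; group
      refine ⟨g2 * s1, ?_⟩
      simp only [Prod.mk.injEq]
      refine ⟨?_, ?_, ?_⟩
      · have h : (g2 * s1) ^ (6 : ℤ) = g2 ^ (3 : ℤ) * g2 ^ (3 : ℤ) * s1 ^ (6 : ℤ) := by
          rw [mul_zpow]; group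
        rw [h, hg2, hg1]; group
      · have h : (g2 * s1) ^ (4 : ℤ) = g2 ^ (3 : ℤ) * g2 * s1 ^ (4 : ℤ) := by
          rw [mul_zpow]; group
        rw [h, hg2, hg1, mul_right_comm]; group
      · have h : (g2 * s1) ^ (-3 : ℤ) = (g2 ^ (3 : ℤ))⁻¹ * s1 ^ (-3 : ℤ) := by
          rw [mul_zpow]; group
        rw [h, hg2, hg1]; group
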